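/- Every irreducible finite-dimensional $\mathfrak{q}(n) \otimes A$-module $V$ ($n \geq 2$, $A$ finitely generated) is annihilated by $\mathfrak{q} \otimes J$ for some radical ideal $J \subseteq A$ of finite codimension; that is, $V$ has finite reduced support. -/

import Mathlib

open Matrix

noncomputable section

variable (n : ℕ) (A : Type*) [CommRing A] [Algebra ℂ A]

/-- Square matrices of size `n+1` with entries in the commutative `ℂ`-algebra `A`. -/
abbrev QMat := Matrix (Fin (n + 1)) (Fin (n + 1)) A

/-- The ambient space of pairs `(X, Y)` of matrices over `A`; a pair represents the
element of `𝔮(n) ⊗ A` with even component `X` and odd component `Y` (using the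
identification of `𝔮(n) ⊗ A` with pairs of traceless `(n+1) × (n+1)` matrices over
`A`, where `(X, Y)` corresponds to the class of `[[X, Y], [Y, X]]`). -/
abbrev QPair := QMat n A × QMat n A

/-- `𝔮(n) ⊗ A`, realized as the space of pairs of traceless matrices over `A`. -/
def qA : Submodule ℂ (QPair n A) where
  carrier := {p | p.1.trace = 0 ∧ p.2.trace = 0}
  add_mem' := by
    intro p q hp hq
    exact ⟨by simp [hp.1, hq.1], by simp [hp.2, hq.2]⟩
  zero_mem' := by simp
  smul_mem' := by
    intro c p hp
    exact ⟨by simp [hp.1], by simp [hp.2]⟩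

/-- The Lie superbracket of `𝔮(n) ⊗ A` in the matrix-pair model: on even components it
is the commutator plus the anticommutator of the odd components (projected back to
traceless matrices), and on odd components it is given by the mixed commutators. -/
def qbr (p q : QPair n A) : QPair n A :=
  (p.1 * q.1 - q.1 * p.1 + p.2 * q.2 + q.2 * p.2 -
      (((n : ℂ) + 1)⁻¹ • (p.2 * q.2 + q.2 * p.2).trace) • (1 : QMat n A),
    p.1 * q.2 - q.2 * p.1 + p.2 * q.1 - q.1 * p.2)

lemma qbr_mem (p q : QPair n A) : qbr n A p q ∈ qA n A := by
  have h1 : ((((n : ℂ) + 1)⁻¹ • (p.2 * q.2 + q.2 * p.2).trace) •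
      (1 : QMat n A)).trace = (p.2 * q.2 + q.2 * p.2).trace := by
    rw [Matrix.trace_smul, Matrix.trace_one, smul_eq_mul, smul_mul_assoc]
    rw [show ((Fintype.card (Fin (n + 1)) : A)) = ((n + 1 : ℕ) : A) by simp]
    rw [← nsmul_eq_mul', ← Nat.cast_smul_eq_nsmul ℂ, smul_smul]
    rw [show (((n + 1 : ℕ) : ℂ)) = (n : ℂ) + 1 by push_cast; ring]
    rw [inv_mul_cancel₀ (by
      exact_mod_cast Nat.cast_add_one_ne_zero (R := ℂ) n), one_smul]
  constructor
  · show (p.1 * q.1 - q.1 * p.1 + p.2 * q.2 + q.2 * p.2 -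
      (((n : ℂ) + 1)⁻¹ • (p.2 * q.2 + q.2 * p.2).trace) • (1 : QMat n A)).trace = 0
    rw [Matrix.trace_sub, h1, Matrix.trace_add, Matrix.trace_add, Matrix.trace_sub,
      Matrix.trace_add, Matrix.trace_mul_comm p.1 q.1]
    ring
  · show (p.1 * q.2 - q.2 * p.1 + p.2 * q.1 - q.1 * p.2).trace = 0
    rw [Matrix.trace_sub, Matrix.trace_add, Matrix.trace_sub,
      Matrix.trace_mul_comm p.1 q.2, Matrix.trace_mul_comm p.2 q.1]
    ring

/-- An element of the matrix-pair model is even if its odd component vanishes. -/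
def IsEvenElt (p : QPair n A) : Prop := p.2 = 0

/-- An element of the matrix-pair model is odd if its even component vanishes. -/
def IsOddElt (p : QPair n A) : Prop := p.1 = 0

/-- Membership in `𝔥₀ ⊗ A`: even, with diagonal matrix component. -/
def InH0 (p : QPair n A) : Prop := p.2 = 0 ∧ p.1.IsDiag

/-- Membership in `𝔥₁ ⊗ A`: odd, with diagonal matrix component. -/
def InH1 (p : QPair n A) : Prop := p.1 = 0 ∧ p.2.IsDiag

/-- Membership in `𝔥 ⊗ A`: both components diagonal. -/
def InH (p : QPair n A) : Prop := p.1.IsDiag ∧ p.2.IsDiag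

/-- Membership in `𝔫⁺ ⊗ A`: both components strictly upper triangular. -/
def InNplus (p : QPair n A) : Prop :=
  ∀ i j : Fin (n + 1), j ≤ i → p.1 i j = 0 ∧ p.2 i j = 0

/-- Membership in `𝔮(n) ⊗ I` for an ideal `I ⊆ A`: all entries lie in `I`. -/
def EntriesIn (I : Ideal A) (p : QPair n A) : Prop :=
  ∀ i j : Fin (n + 1), p.1 i j ∈ I ∧ p.2 i j ∈ I

/-- `𝔥₀ ⊗ A` as a subspace of the matrix-pair model of `𝔮(n) ⊗ A`: even diagonal
traceless pairs. -/
def h0A : Submodule ℂ (QPair n A) where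
  carrier := {p | p.2 = 0 ∧ p.1.IsDiag ∧ p.1.trace = 0}
  add_mem' := by
    intro p q hp hq
    exact ⟨by simp [hp.1, hq.1], hp.2.1.add hq.2.1, by simp [hp.2.2, hq.2.2]⟩
  zero_mem' := ⟨rfl, Matrix.isDiag_zero, by simp⟩
  smul_mem' := by
    intro c p hp
    exact ⟨by simp [hp.1], hp.2.1.smul c, by simp [hp.2.2]⟩

lemma h0A_le_qA : h0A n A ≤ qA n A := by
  intro p hp
  exact ⟨hp.2.2, by simp [hp.1]⟩

/-- The raw data of an action of `𝔮(n) ⊗ A` on a `ℤ₂`-graded vector space `M`: an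
action map and the parity involution `P` of `M`. -/
structure QAct (M : Type*) [AddCommGroup M] [Module ℂ M] where
  act : ↥(qA n A) →ₗ[ℂ] M →ₗ[ℂ] M
  P : M →ₗ[ℂ] M

variable {M : Type*} [AddCommGroup M] [Module ℂ M]

/-- The data `ρ` is a representation of the Lie superalgebra `𝔮(n) ⊗ A`: `P` is an
involution, commuting (resp. anticommuting) with the action of even (resp. odd)
elements, and the bracket acts by the supercommutator. -/
def QAct.IsRep (ρ : QAct n A M) : Prop :=
  (ρ.P ∘ₗ ρ.P = LinearMap.id) ∧
  (∀ x : ↥(qA n A), IsEvenElt n A ↑x → ρ.P ∘ₗ ρ.act x = ρ.act x ∘ₗ ρ.P) ∧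
  (∀ x : ↥(qA n A), IsOddElt n A ↑x → ρ.P ∘ₗ ρ.act x = -(ρ.act x ∘ₗ ρ.P)) ∧
  (∀ x y : ↥(qA n A), (IsEvenElt n A ↑x ∨ IsEvenElt n A ↑y) →
    ρ.act ⟨qbr n A ↑x ↑y, qbr_mem n A _ _⟩ = ρ.act x ∘ₗ ρ.act y - ρ.act y ∘ₗ ρ.act x) ∧
  (∀ x y : ↥(qA n A), IsOddElt n A ↑x → IsOddElt n A ↑y →
    ρ.act ⟨qbr n A ↑x ↑y, qbr_mem n A _ _⟩ = ρ.act x ∘ₗ ρ.act y + ρ.act y ∘ₗ ρ.act x)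

/-- A graded submodule: stable under the action and under the parity involution. -/
def QAct.Invt (ρ : QAct n A M) (N : Submodule ℂ M) : Prop :=
  (∀ x : ↥(qA n A), ∀ m ∈ N, ρ.act x m ∈ N) ∧ ∀ m ∈ N, ρ.P m ∈ N

/-- Irreducibility: `M ≠ 0` and the only graded invariant subspaces are `0`, `M`. -/
def QAct.Irred (ρ : QAct n A M) : Prop :=
  Nontrivial M ∧ ∀ N : Submodule ℂ M, QAct.Invt n A ρ N → N = ⊥ ∨ N = ⊤

/-- The `U(𝔮(n) ⊗ A)`-submodule of `M` generated by `v`: the smallest subspace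
containing `v` and stable under the action. -/
def QAct.gen (ρ : QAct n A M) (v : M) : Submodule ℂ M :=
  sInf {N | v ∈ N ∧ ∀ x : ↥(qA n A), ∀ m ∈ N, ρ.act x m ∈ N}

/-- `v` is a highest weight vector of `ρ` with highest weight `ψ : 𝔥₀ ⊗ A → ℂ`:
`v ≠ 0`, `v` generates `M` (i.e. `U(𝔮 ⊗ A)v = M`), `(𝔫⁺ ⊗ A)v = 0` and every element
of `𝔥₀ ⊗ A` acts on `v` by the scalar given by `ψ` (i.e. `U(𝔥₀ ⊗ A)v = ℂv`). -/
def QAct.IsHWVector (ρ : QAct n A M) (ψ : ↥(h0A n A) →ₗ[ℂ] ℂ) (v : M) : Prop :=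
  v ≠ 0 ∧ QAct.gen n A ρ v = ⊤ ∧
  (∀ x : ↥(qA n A), InNplus n A ↑x → ρ.act x v = 0) ∧
  (∀ (p : QPair n A) (hp : p ∈ h0A n A),
    ρ.act ⟨p, h0A_le_qA n A hp⟩ v = ψ ⟨p, hp⟩ • v)

/-- `ψ ∈ 𝓛(𝔥 ⊗ A)`: a functional on `𝔥₀ ⊗ A` vanishing on `𝔥₀ ⊗ I` for some
finite-codimensional ideal `I ⊆ A`. -/
def LFun (ψ : ↥(h0A n A) →ₗ[ℂ] ℂ) : Prop :=
  ∃ I : Ideal A, FiniteDimensional ℂ (A ⧸ I) ∧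
    ∀ x : ↥(h0A n A), EntriesIn n A I ↑x → ψ x = 0

/-! ### Auxiliary machinery for the proof -/

set_option linter.unusedSectionVars false

section Aux

/-- Elementary even element `E_{ij} ⊗ a` (zero when `i = j`). -/
def E0 (i j : Fin (n + 1)) (a : A) : ↥(qA n A) :=
  if h : i = j then 0 else
    ⟨(Matrix.single i j a, 0),
      ⟨Matrix.trace_single_eq_of_ne i j a h, by simp⟩⟩

/-- Elementary odd element `E_{ij} ⊗ a` (zero when `i = j`). -/
def E1 (i j : Fin (n + 1)) (a : A) : ↥(qA n A) :=
  if h : i = j then 0 else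
    ⟨(0, Matrix.single i j a),
      ⟨by simp, Matrix.trace_single_eq_of_ne i j a h⟩⟩

/-- Elementary even diagonal element `(E_{ii} - E_{NN}) ⊗ a`. -/
def H0 (i : Fin (n + 1)) (a : A) : ↥(qA n A) :=
  if h : i = Fin.last n then 0 else
    ⟨(Matrix.single i i a - Matrix.single (Fin.last n) (Fin.last n) a, 0),
      ⟨by simp [Matrix.trace_single_eq_same], by simp⟩⟩

/-- Elementary odd diagonal element `(E_{ii} - E_{NN}) ⊗ a`. -/
def H1 (i : Fin (n + 1)) (a : A) : ↥(qA n A) :=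
  if h : i = Fin.last n then 0 else
    ⟨(0, Matrix.single i i a - Matrix.single (Fin.last n) (Fin.last n) a),
      ⟨by simp, by simp [Matrix.trace_single_eq_same]⟩⟩

lemma E0_coe (i j : Fin (n + 1)) (a : A) :
    (↑(E0 n A i j a) : QPair n A) =
      ((if i = j then 0 else Matrix.single i j a : QMat n A), (0 : QMat n A)) := by
  unfold E0; split <;> simp_all <;> rfl

lemma E1_coe (i j : Fin (n + 1)) (a : A) :
    (↑(E1 n A i j a) : QPair n A) =
      ((0 : QMat n A), (if i = j then 0 else Matrix.single i j a : QMat n A)) := by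
  unfold E1; split <;> simp_all <;> rfl

lemma H0_coe (i : Fin (n + 1)) (a : A) :
    (↑(H0 n A i a) : QPair n A) =
      ((if i = Fin.last n then 0 else
          Matrix.single i i a -
            Matrix.single (Fin.last n) (Fin.last n) a : QMat n A), (0 : QMat n A)) := by
  unfold H0; split <;> simp_all <;> rfl

lemma H1_coe (i : Fin (n + 1)) (a : A) :
    (↑(H1 n A i a) : QPair n A) =
      ((0 : QMat n A), (if i = Fin.last n then 0 else
          Matrix.single i i a -
            Matrix.single (Fin.last n) (Fin.last n) a : QMat n A)) := by
  unfold H1; split <;> simp_all <;> rfl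

lemma mat_decomp (X : QMat n A) (hX : X.trace = 0) :
    (∑ i, ∑ j, (if i = j then (0 : QMat n A) else Matrix.single i j (X i j)))
      + (∑ i, (if i = Fin.last n then (0 : QMat n A) else
          Matrix.single i i (X i i) -
            Matrix.single (Fin.last n) (Fin.last n) (X i i))) = X := by
  have hstd : ∀ (i : Fin (n + 1)) (a : A),
      Matrix.single i i a = a • Matrix.single i i (1 : A) := by
    intro i a; rw [Matrix.smul_single, smul_eq_mul, mul_one]
  have htr : ∑ i, X i i = 0 := hX
  have h1 : ∀ i : Fin (n + 1),
      (∑ j, (if i = j then (0 : QMat n A) else Matrix.single i j (X i j)))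
        = (∑ j, Matrix.single i j (X i j)) - Matrix.single i i (X i i) := by
    intro i
    rw [eq_sub_iff_add_eq]
    conv_lhs => rw [show Matrix.single i i (X i i)
      = ∑ j, if i = j then Matrix.single i j (X i j) else 0 by
        rw [Finset.sum_ite_eq]; simp]
    rw [← Finset.sum_add_distrib]
    refine Finset.sum_congr rfl fun j _ => ?_
    split <;> simp
  have h2 : (∑ i, (if i = Fin.last n then (0 : QMat n A) else
      Matrix.single i i (X i i) -
        Matrix.single (Fin.last n) (Fin.last n) (X i i)))
      = ∑ i, Matrix.single i i (X i i) := by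
    have hsplit : ∀ i : Fin (n + 1),
        (if i = Fin.last n then (0 : QMat n A) else
          Matrix.single i i (X i i) -
            Matrix.single (Fin.last n) (Fin.last n) (X i i))
        = (if i = Fin.last n then (0 : QMat n A) else Matrix.single i i (X i i))
          - (if i = Fin.last n then (0 : QMat n A) else
              (X i i) • Matrix.single (Fin.last n) (Fin.last n) (1 : A)) := by
      intro i; split <;> simp [← hstd]
    rw [Finset.sum_congr rfl fun i _ => hsplit i, Finset.sum_sub_distrib]
    have hA : (∑ i, (if i = Fin.last n then (0 : QMat n A)
        else Matrix.single i i (X i i)))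
        = ∑ i, Matrix.single i i (X i i)
          - Matrix.single (Fin.last n) (Fin.last n) (X (Fin.last n) (Fin.last n)) := by
      rw [eq_sub_iff_add_eq]
      conv_lhs => rw [show Matrix.single (Fin.last n) (Fin.last n) (X (Fin.last n) (Fin.last n))
        = ∑ i, if i = Fin.last n then Matrix.single i i (X i i) else 0 by
          rw [Finset.sum_ite_eq']; simp]
      rw [← Finset.sum_add_distrib]
      refine Finset.sum_congr rfl fun i _ => ?_
      split <;> simp
    have hB : (∑ i, (if i = Fin.last n then (0 : QMat n A) else
        (X i i) • Matrix.single (Fin.last n) (Fin.last n) (1 : A)))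
        = -(Matrix.single (Fin.last n) (Fin.last n) (X (Fin.last n) (Fin.last n))) := by
      have : ∀ i : Fin (n + 1), (if i = Fin.last n then (0 : QMat n A) else
          (X i i) • Matrix.single (Fin.last n) (Fin.last n) (1 : A))
          = (if i = Fin.last n then (0 : A) else X i i) •
              Matrix.single (Fin.last n) (Fin.last n) (1 : A) := by
        intro i; split <;> simp
      rw [Finset.sum_congr rfl fun i _ => this i, ← Finset.sum_smul]
      have hc : (∑ i, (if i = Fin.last n then (0 : A) else X i i))
          = -(X (Fin.last n) (Fin.last n)) := by
        have : (∑ i, (if i = Fin.last n then (0 : A) else X i i))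
            + ∑ i, (if i = Fin.last n then X i i else 0) = ∑ i, X i i := by
          rw [← Finset.sum_add_distrib]
          refine Finset.sum_congr rfl fun i _ => ?_
          split <;> simp
        rw [Finset.sum_ite_eq'] at this
        simp only [Finset.mem_univ, if_true] at this
        rw [htr] at this
        exact eq_neg_of_add_eq_zero_left this
      rw [hc, neg_smul, ← hstd]
    rw [hA, hB]
    abel
  rw [Finset.sum_congr rfl fun i _ => h1 i, Finset.sum_sub_distrib, h2]
  rw [← matrix_eq_sum_single X]
  abel

/-- Decomposition of an arbitrary element of `𝔮(n) ⊗ A` into elementary elements. -/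
lemma qA_decomp (x : ↥(qA n A)) :
    x = ((∑ i, ∑ j, E0 n A i j ((x : QPair n A).1 i j))
        + (∑ i, H0 n A i ((x : QPair n A).1 i i)))
      + ((∑ i, ∑ j, E1 n A i j ((x : QPair n A).2 i j))
        + (∑ i, H1 n A i ((x : QPair n A).2 i i))) := by
  apply Subtype.ext
  have h1 := mat_decomp n A (x : QPair n A).1 x.2.1
  have h2 := mat_decomp n A (x : QPair n A).2 x.2.2
  apply Prod.ext
  · push_cast [E0_coe, E1_coe, H0_coe, H1_coe]
    simp only [Prod.fst_add, Prod.fst_sum, Prod.snd_add, Prod.snd_sum]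
    simpa using h1.symm
  · push_cast [E0_coe, E1_coe, H0_coe, H1_coe]
    simp only [Prod.fst_add, Prod.fst_sum, Prod.snd_add, Prod.snd_sum]
    simpa using h2.symm

lemma E0_add (i j : Fin (n + 1)) (a b : A) :
    E0 n A i j (a + b) = E0 n A i j a + E0 n A i j b := by
  apply Subtype.ext; push_cast [E0_coe]
  refine Prod.ext ?_ ?_ <;> simp only [Prod.fst_add, Prod.snd_add] <;>
    first
      | (split <;> simp [Matrix.single_add])
      | simp

lemma E1_add (i j : Fin (n + 1)) (a b : A) :
    E1 n A i j (a + b) = E1 n A i j a + E1 n A i j b := by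
  apply Subtype.ext; push_cast [E1_coe]
  refine Prod.ext ?_ ?_ <;> simp only [Prod.fst_add, Prod.snd_add] <;>
    first
      | (split <;> simp [Matrix.single_add])
      | simp

lemma H0_add (i : Fin (n + 1)) (a b : A) :
    H0 n A i (a + b) = H0 n A i a + H0 n A i b := by
  apply Subtype.ext; push_cast [H0_coe]
  apply Prod.ext <;> split <;> simp [Matrix.single_add] <;> abel

lemma H1_add (i : Fin (n + 1)) (a b : A) :
    H1 n A i (a + b) = H1 n A i a + H1 n A i b := by
  apply Subtype.ext; push_cast [H1_coe]
  apply Prod.ext <;> split <;> simp [Matrix.single_add] <;> abel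

lemma E0_zero (i j : Fin (n + 1)) : E0 n A i j 0 = 0 := by
  apply Subtype.ext; push_cast [E0_coe]; apply Prod.ext <;> simp

lemma E1_zero (i j : Fin (n + 1)) : E1 n A i j 0 = 0 := by
  apply Subtype.ext; push_cast [E1_coe]; apply Prod.ext <;> simp

lemma H0_zero (i : Fin (n + 1)) : H0 n A i 0 = 0 := by
  apply Subtype.ext; push_cast [H0_coe]; apply Prod.ext <;> simp

lemma H1_zero (i : Fin (n + 1)) : H1 n A i 0 = 0 := by
  apply Subtype.ext; push_cast [H1_coe]; apply Prod.ext <;> simp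

lemma E0_smul (i j : Fin (n + 1)) (c : ℂ) (a : A) :
    E0 n A i j (c • a) = c • E0 n A i j a := by
  apply Subtype.ext; push_cast [E0_coe]
  apply Prod.ext <;> simp [Matrix.smul_single]

lemma E1_smul (i j : Fin (n + 1)) (c : ℂ) (a : A) :
    E1 n A i j (c • a) = c • E1 n A i j a := by
  apply Subtype.ext; push_cast [E1_coe]
  apply Prod.ext <;> simp [Matrix.smul_single]

lemma H0_smul (i : Fin (n + 1)) (c : ℂ) (a : A) :
    H0 n A i (c • a) = c • H0 n A i a := by
  apply Subtype.ext; push_cast [H0_coe]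
  apply Prod.ext <;> split <;> simp [smul_sub, Matrix.smul_single]

lemma H1_smul (i : Fin (n + 1)) (c : ℂ) (a : A) :
    H1 n A i (c • a) = c • H1 n A i a := by
  apply Subtype.ext; push_cast [H1_coe]
  apply Prod.ext <;> split <;> simp [smul_sub, Matrix.smul_single]

lemma exists_third (hn : 2 ≤ n) (i j : Fin (n + 1)) : ∃ k : Fin (n + 1), k ≠ i ∧ k ≠ j := by
  by_contra h
  push_neg at h
  have hsub : (Finset.univ : Finset (Fin (n + 1))) ⊆ {i, j} := by
    intro k _
    rcases eq_or_ne k i with hk | hk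
    · simp [hk]
    · simp [h k hk]
  have := Finset.card_le_card hsub
  have h2 : ({i, j} : Finset (Fin (n + 1))).card ≤ 2 :=
    (Finset.card_insert_le _ _).trans (by simp)
  simp [Finset.card_univ] at this
  omega

/-- Bracket of two elementary even elements. -/
lemma qbr_E0_E0 (i k j : Fin (n + 1)) (hik : i ≠ k) (hkj : k ≠ j) (hij : i ≠ j) (b a : A) :
    qbr n A ↑(E0 n A i k b) ↑(E0 n A k j a) = ↑(E0 n A i j (b * a)) := by
  rw [E0_coe, E0_coe, E0_coe]
  simp only [if_neg hik, if_neg hkj, if_neg hij]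
  unfold qbr
  simp [Ne.symm hij]

lemma qbr_E0_E1 (i k j : Fin (n + 1)) (hik : i ≠ k) (hkj : k ≠ j) (hij : i ≠ j) (b a : A) :
    qbr n A ↑(E0 n A i k b) ↑(E1 n A k j a) = ↑(E1 n A i j (b * a)) := by
  rw [E0_coe, E1_coe, E1_coe]
  simp only [if_neg hik, if_neg hkj, if_neg hij]
  unfold qbr
  simp [Ne.symm hij]

lemma qbr_E0_H0 (i : Fin (n + 1)) (hi : i ≠ Fin.last n) (b a : A) :
    qbr n A ↑(E0 n A i (Fin.last n) b) ↑(E0 n A (Fin.last n) i a) = ↑(H0 n A i (b * a)) := by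
  rw [E0_coe, E0_coe, H0_coe]
  simp only [if_neg hi]
  unfold qbr
  simp [mul_comm a b, Ne.symm hi]

lemma qbr_E0_H1 (i : Fin (n + 1)) (hi : i ≠ Fin.last n) (b a : A) :
    qbr n A ↑(E0 n A i (Fin.last n) b) ↑(E1 n A (Fin.last n) i a) = ↑(H1 n A i (b * a)) := by
  rw [E0_coe, E1_coe, H1_coe]
  simp only [if_neg hi]
  unfold qbr
  simp [mul_comm a b, Ne.symm hi]

lemma E0_isEven (i j : Fin (n + 1)) (a : A) : IsEvenElt n A ↑(E0 n A i j a) := by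
  unfold IsEvenElt; rw [E0_coe]

lemma H0_isEven (i : Fin (n + 1)) (a : A) : IsEvenElt n A ↑(H0 n A i a) := by
  unfold IsEvenElt; rw [H0_coe]

lemma E1_isOdd (i j : Fin (n + 1)) (a : A) : IsOddElt n A ↑(E1 n A i j a) := by
  unfold IsOddElt; rw [E1_coe]

lemma H1_isOdd (i : Fin (n + 1)) (a : A) : IsOddElt n A ↑(H1 n A i a) := by
  unfold IsOddElt; rw [H1_coe]

lemma E0_entriesIn {I : Ideal A} (i j : Fin (n + 1)) {a : A} (ha : a ∈ I) :
    EntriesIn n A I ↑(E0 n A i j a) := by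
  intro i' j'
  rw [E0_coe]
  constructor
  · split
    · simp [I.zero_mem]
    · unfold Matrix.single
      simp only [Matrix.of_apply]
      split <;> simp [ha, I.zero_mem]
  · simp [I.zero_mem]

lemma E1_entriesIn {I : Ideal A} (i j : Fin (n + 1)) {a : A} (ha : a ∈ I) :
    EntriesIn n A I ↑(E1 n A i j a) := by
  intro i' j'
  rw [E1_coe]
  refine ⟨by simp [I.zero_mem], ?_⟩
  split
  · simp [I.zero_mem]
  · unfold Matrix.single
    simp only [Matrix.of_apply]
    split <;> simp [ha, I.zero_mem]

lemma H0_entriesIn {I : Ideal A} (i : Fin (n + 1)) {a : A} (ha : a ∈ I) :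
    EntriesIn n A I ↑(H0 n A i a) := by
  intro i' j'
  rw [H0_coe]
  constructor
  · split
    · simp [I.zero_mem]
    · refine Submodule.sub_mem I ?_ ?_ <;>
      · unfold Matrix.single
        simp only [Matrix.sub_apply, Matrix.of_apply]
        split <;> simp [ha, I.zero_mem]
  · simp [I.zero_mem]

lemma H1_entriesIn {I : Ideal A} (i : Fin (n + 1)) {a : A} (ha : a ∈ I) :
    EntriesIn n A I ↑(H1 n A i a) := by
  intro i' j'
  rw [H1_coe]
  refine ⟨by simp [I.zero_mem], ?_⟩
  split
  · simp [I.zero_mem]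
  · refine Submodule.sub_mem I ?_ ?_ <;>
    · unfold Matrix.single
      simp only [Matrix.sub_apply, Matrix.of_apply]
      split <;> simp [ha, I.zero_mem]

lemma E0_diag (i : Fin (n + 1)) (a : A) : E0 n A i i a = 0 := by
  unfold E0; rw [dif_pos rfl]

lemma H0_last (a : A) : H0 n A (Fin.last n) a = 0 := by
  unfold H0; rw [dif_pos rfl]

lemma H1_last (a : A) : H1 n A (Fin.last n) a = 0 := by
  unfold H1; rw [dif_pos rfl]

lemma E1_diag (i : Fin (n + 1)) (a : A) : E1 n A i i a = 0 := by
  unfold E1; rw [dif_pos rfl]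

variable {M : Type*} [AddCommGroup M] [Module ℂ M]

lemma act_decomp (ρ : QAct n A M) (x : ↥(qA n A)) :
    ρ.act x = ((∑ i, ∑ j, ρ.act (E0 n A i j ((x : QPair n A).1 i j)))
        + ∑ i, ρ.act (H0 n A i ((x : QPair n A).1 i i)))
      + ((∑ i, ∑ j, ρ.act (E1 n A i j ((x : QPair n A).2 i j)))
        + ∑ i, ρ.act (H1 n A i ((x : QPair n A).2 i i))) := by
  conv_lhs => rw [qA_decomp n A x]
  simp only [map_add, map_sum]

lemma act_qbr_of_even_left (ρ : QAct n A M) (hrep : QAct.IsRep n A ρ)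
    {x y : ↥(qA n A)} (hx : IsEvenElt n A ↑x) :
    ρ.act ⟨qbr n A ↑x ↑y, qbr_mem n A _ _⟩ = ρ.act x ∘ₗ ρ.act y - ρ.act y ∘ₗ ρ.act x :=
  hrep.2.2.2.1 x y (Or.inl hx)

lemma act_qbr_of_odd (ρ : QAct n A M) (hrep : QAct.IsRep n A ρ)
    {x y : ↥(qA n A)} (hx : IsOddElt n A ↑x) (hy : IsOddElt n A ↑y) :
    ρ.act ⟨qbr n A ↑x ↑y, qbr_mem n A _ _⟩ = ρ.act x ∘ₗ ρ.act y + ρ.act y ∘ₗ ρ.act x :=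
  hrep.2.2.2.2 x y hx hy

lemma act_congr (ρ : QAct n A M) {x : QPair n A} {hx : x ∈ qA n A} {w : ↥(qA n A)}
    (h : x = ↑w) : ρ.act ⟨x, hx⟩ = ρ.act w := congrArg ρ.act (Subtype.ext h)

/-- The annihilator ideal of the representation: all `a ∈ A` such that every
elementary element with coefficient `a` acts by zero. -/
def Kann (ρ : QAct n A M) (hn : 2 ≤ n) (hrep : QAct.IsRep n A ρ) : Ideal A where
  carrier := {a | (∀ i j, ρ.act (E0 n A i j a) = 0) ∧ (∀ i j, ρ.act (E1 n A i j a) = 0)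
    ∧ (∀ i, ρ.act (H0 n A i a) = 0) ∧ (∀ i, ρ.act (H1 n A i a) = 0)}
  add_mem' := by
    rintro a b ⟨ha0, ha1, ha2, ha3⟩ ⟨hb0, hb1, hb2, hb3⟩
    refine ⟨fun i j => ?_, fun i j => ?_, fun i => ?_, fun i => ?_⟩
    · rw [E0_add, map_add, ha0 i j, hb0 i j, add_zero]
    · rw [E1_add, map_add, ha1 i j, hb1 i j, add_zero]
    · rw [H0_add, map_add, ha2 i, hb2 i, add_zero]
    · rw [H1_add, map_add, ha3 i, hb3 i, add_zero]
  zero_mem' := by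
    refine ⟨fun i j => ?_, fun i j => ?_, fun i => ?_, fun i => ?_⟩
    · rw [E0_zero, map_zero]
    · rw [E1_zero, map_zero]
    · rw [H0_zero, map_zero]
    · rw [H1_zero, map_zero]
  smul_mem' := by
    rintro b a ⟨ha0, ha1, ha2, ha3⟩
    rw [smul_eq_mul]
    refine ⟨fun i j => ?_, fun i j => ?_, fun i => ?_, fun i => ?_⟩
    · rcases eq_or_ne i j with rfl | hij
      · rw [E0_diag, map_zero]
      · obtain ⟨k, hki, hkj⟩ := exists_third n hn i j
        rw [← act_congr n A ρ (hx := qbr_mem n A _ _) (qbr_E0_E0 n A i k j (Ne.symm hki) hkj hij b a),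
          act_qbr_of_even_left n A ρ hrep (E0_isEven n A i k b), ha0 k j]
        simp
    · rcases eq_or_ne i j with rfl | hij
      · rw [E1_diag, map_zero]
      · obtain ⟨k, hki, hkj⟩ := exists_third n hn i j
        rw [← act_congr n A ρ (hx := qbr_mem n A _ _) (qbr_E0_E1 n A i k j (Ne.symm hki) hkj hij b a),
          act_qbr_of_even_left n A ρ hrep (E0_isEven n A i k b), ha1 k j]
        simp
    · rcases eq_or_ne i (Fin.last n) with rfl | hi
      · rw [H0_last, map_zero]
      · rw [← act_congr n A ρ (hx := qbr_mem n A _ _) (qbr_E0_H0 n A i hi b a),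
          act_qbr_of_even_left n A ρ hrep (E0_isEven n A i (Fin.last n) b), ha0 (Fin.last n) i]
        simp
    · rcases eq_or_ne i (Fin.last n) with rfl | hi
      · rw [H1_last, map_zero]
      · rw [← act_congr n A ρ (hx := qbr_mem n A _ _) (qbr_E0_H1 n A i hi b a),
          act_qbr_of_even_left n A ρ hrep (E0_isEven n A i (Fin.last n) b), ha1 (Fin.last n) i]
        simp

lemma act_eq_zero_of_entriesIn (ρ : QAct n A M) (hn : 2 ≤ n) (hrep : QAct.IsRep n A ρ)
    {I : Ideal A} (hI : I ≤ Kann n A ρ hn hrep) (x : ↥(qA n A))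
    (hx : EntriesIn n A I ↑x) : ρ.act x = 0 := by
  rw [act_decomp n A ρ x]
  have h0 : ∀ i j : Fin (n + 1), ρ.act (E0 n A i j ((x : QPair n A).1 i j)) = 0 :=
    fun i j => (hI (hx i j).1).1 i j
  have h1 : ∀ i j : Fin (n + 1), ρ.act (E1 n A i j ((x : QPair n A).2 i j)) = 0 :=
    fun i j => (hI (hx i j).2).2.1 i j
  have h2 : ∀ i : Fin (n + 1), ρ.act (H0 n A i ((x : QPair n A).1 i i)) = 0 :=
    fun i => (hI (hx i i).1).2.2.1 i
  have h3 : ∀ i : Fin (n + 1), ρ.act (H1 n A i ((x : QPair n A).2 i i)) = 0 :=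
    fun i => (hI (hx i i).2).2.2.2 i
  simp [h0, h1, h2, h3]

/-- The trace of the action of any even element vanishes (using `n ≥ 2`:
every traceless matrix is a sum of commutators). -/
lemma trace_act_even (ρ : QAct n A M) (hn : 2 ≤ n) (hrep : QAct.IsRep n A ρ)
    (z : ↥(qA n A)) (hz : (↑z : QPair n A).2 = 0) :
    LinearMap.trace ℂ M (ρ.act z) = 0 := by
  have htrE0 : ∀ (i j : Fin (n + 1)) (c : A),
      LinearMap.trace ℂ M (ρ.act (E0 n A i j c)) = 0 := by
    intro i j c
    rcases eq_or_ne i j with rfl | hij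
    · rw [E0_diag, map_zero, map_zero]
    · obtain ⟨k, hki, hkj⟩ := exists_third n hn i j
      rw [show c = 1 * c by rw [one_mul],
        ← act_congr n A ρ (hx := qbr_mem n A _ _) (qbr_E0_E0 n A i k j (Ne.symm hki) hkj hij 1 c),
        act_qbr_of_even_left n A ρ hrep (E0_isEven n A i k 1), map_sub,
        ← Module.End.mul_eq_comp, ← Module.End.mul_eq_comp, LinearMap.trace_mul_comm, sub_self]
  have htrH0 : ∀ (i : Fin (n + 1)) (c : A),
      LinearMap.trace ℂ M (ρ.act (H0 n A i c)) = 0 := by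
    intro i c
    rcases eq_or_ne i (Fin.last n) with rfl | hi
    · rw [H0_last, map_zero, map_zero]
    · rw [show c = 1 * c by rw [one_mul],
        ← act_congr n A ρ (hx := qbr_mem n A _ _) (qbr_E0_H0 n A i hi 1 c),
        act_qbr_of_even_left n A ρ hrep (E0_isEven n A i (Fin.last n) 1), map_sub,
        ← Module.End.mul_eq_comp, ← Module.End.mul_eq_comp, LinearMap.trace_mul_comm, sub_self]
  rw [act_decomp n A ρ z, hz]
  simp [E1_zero, H1_zero, htrE0, htrH0]

lemma smulC_mem (I : Ideal A) (c : ℂ) {t : A} (ht : t ∈ I) : c • t ∈ I := by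
  rw [Algebra.smul_def]; exact I.mul_mem_left _ ht

lemma entriesIn_mono {I I' : Ideal A} (h : I ≤ I') {p : QPair n A}
    (hp : EntriesIn n A I p) : EntriesIn n A I' p :=
  fun i j => ⟨h (hp i j).1, h (hp i j).2⟩

lemma entriesIn_qbr {I I' : Ideal A} {p q : QPair n A}
    (hp : EntriesIn n A I p) (hq : EntriesIn n A I' q) :
    EntriesIn n A (I * I') (qbr n A p q) := by
  have hPQ : ∀ P Q : QMat n A, (∀ i j, P i j ∈ I) → (∀ i j, Q i j ∈ I') →
      ∀ i j, (P * Q) i j ∈ I * I' := by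
    intro P Q hP hQ i j
    rw [Matrix.mul_apply]
    exact Submodule.sum_mem _ fun l _ => Ideal.mul_mem_mul (hP i l) (hQ l j)
  have hQP : ∀ Q P : QMat n A, (∀ i j, Q i j ∈ I') → (∀ i j, P i j ∈ I) →
      ∀ i j, (Q * P) i j ∈ I * I' := by
    intro Q P hQ hP i j
    rw [Matrix.mul_apply]
    exact Submodule.sum_mem _ fun l _ => by
      rw [mul_comm (Q i l) (P l j)]; exact Ideal.mul_mem_mul (hP l j) (hQ i l)
  have hp1 : ∀ i j, p.1 i j ∈ I := fun i j => (hp i j).1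
  have hp2 : ∀ i j, p.2 i j ∈ I := fun i j => (hp i j).2
  have hq1 : ∀ i j, q.1 i j ∈ I' := fun i j => (hq i j).1
  have hq2 : ∀ i j, q.2 i j ∈ I' := fun i j => (hq i j).2
  intro i j
  constructor
  · show (p.1 * q.1 - q.1 * p.1 + p.2 * q.2 + q.2 * p.2 -
      (((n : ℂ) + 1)⁻¹ • (p.2 * q.2 + q.2 * p.2).trace) • (1 : QMat n A)) i j ∈ I * I'
    have htr : (p.2 * q.2 + q.2 * p.2).trace ∈ I * I' := by
      refine Submodule.sum_mem _ fun l _ => ?_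
      show (p.2 * q.2 + q.2 * p.2) l l ∈ I * I'
      rw [Matrix.add_apply]
      exact Submodule.add_mem _ (hPQ _ _ hp2 hq2 l l) (hQP _ _ hq2 hp2 l l)
    simp only [Matrix.sub_apply, Matrix.add_apply, Matrix.smul_apply, Matrix.one_apply,
      smul_eq_mul, mul_ite, mul_one, mul_zero]
    refine Submodule.sub_mem _
      (Submodule.add_mem _ (Submodule.add_mem _
        (Submodule.sub_mem _ (hPQ _ _ hp1 hq1 i j) (hQP _ _ hq1 hp1 i j))
        (hPQ _ _ hp2 hq2 i j)) (hQP _ _ hq2 hp2 i j)) ?_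
    split
    · exact smulC_mem _ _ _ htr
    · exact Submodule.zero_mem _
  · show (p.1 * q.2 - q.2 * p.1 + p.2 * q.1 - q.1 * p.2) i j ∈ I * I'
    simp only [Matrix.sub_apply, Matrix.add_apply]
    exact Submodule.sub_mem _
      (Submodule.add_mem _
        (Submodule.sub_mem _ (hPQ _ _ hp1 hq2 i j) (hQP _ _ hq2 hp1 i j))
        (hPQ _ _ hp2 hq1 i j))
      (hQP _ _ hq1 hp2 i j)

lemma entriesIn_top (p : QPair n A) : EntriesIn n A ⊤ p :=
  fun _ _ => ⟨trivial, trivial⟩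

lemma entriesIn_qbr_left {I : Ideal A} {p q : QPair n A} (hp : EntriesIn n A I p) :
    EntriesIn n A I (qbr n A p q) :=
  entriesIn_mono n A Ideal.mul_le_left (entriesIn_qbr n A hp (entriesIn_top n A q))

/-- The even part of an element of `𝔮(n) ⊗ A`. -/
def evenPart (x : ↥(qA n A)) : ↥(qA n A) := ⟨((x : QPair n A).1, 0), ⟨x.2.1, by simp⟩⟩

/-- The odd part of an element of `𝔮(n) ⊗ A`. -/
def oddPart (x : ↥(qA n A)) : ↥(qA n A) := ⟨(0, (x : QPair n A).2), ⟨by simp, x.2.2⟩⟩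

lemma evenPart_add_oddPart (x : ↥(qA n A)) : evenPart n A x + oddPart n A x = x := by
  apply Subtype.ext
  show ((evenPart n A x : QPair n A) + (oddPart n A x : QPair n A)) = (x : QPair n A)
  apply Prod.ext <;> simp [evenPart, oddPart]

lemma evenPart_isEven (x : ↥(qA n A)) : IsEvenElt n A ↑(evenPart n A x) := rfl

lemma oddPart_isOdd (x : ↥(qA n A)) : IsOddElt n A ↑(oddPart n A x) := rfl

lemma entriesIn_evenPart {I : Ideal A} {x : ↥(qA n A)} (hx : EntriesIn n A I ↑x) :
    EntriesIn n A I ↑(evenPart n A x) :=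
  fun i j => ⟨(hx i j).1, by show (0 : QMat n A) i j ∈ I; simp [I.zero_mem]⟩

lemma entriesIn_oddPart {I : Ideal A} {x : ↥(qA n A)} (hx : EntriesIn n A I ↑x) :
    EntriesIn n A I ↑(oddPart n A x) :=
  fun i j => ⟨by show (0 : QMat n A) i j ∈ I; simp [I.zero_mem], (hx i j).2⟩

variable {M' : Type*} [AddCommGroup M'] [Module ℂ M']

lemma act_swap (ρ : QAct n A M') (hrep : QAct.IsRep n A ρ) {x y : ↥(qA n A)}
    (h : IsEvenElt n A ↑x ∨ IsEvenElt n A ↑y) (m : M') :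
    ρ.act x (ρ.act y m) = ρ.act y (ρ.act x m)
      + ρ.act ⟨qbr n A ↑x ↑y, qbr_mem n A _ _⟩ m := by
  have h4 := LinearMap.ext_iff.mp (hrep.2.2.2.1 x y h) m
  simp only [LinearMap.sub_apply, LinearMap.coe_comp, Function.comp_apply] at h4
  rw [h4]; abel

lemma act_swap_odd (ρ : QAct n A M') (hrep : QAct.IsRep n A ρ) {x y : ↥(qA n A)}
    (hx : IsOddElt n A ↑x) (hy : IsOddElt n A ↑y) (m : M') :
    ρ.act x (ρ.act y m) = ρ.act ⟨qbr n A ↑x ↑y, qbr_mem n A _ _⟩ m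
      - ρ.act y (ρ.act x m) := by
  have h5 := LinearMap.ext_iff.mp (hrep.2.2.2.2 x y hx hy) m
  simp only [LinearMap.add_apply, LinearMap.coe_comp, Function.comp_apply] at h5
  rw [h5]; abel

lemma act_split (ρ : QAct n A M') (x : ↥(qA n A)) (m : M') :
    ρ.act x m = ρ.act (evenPart n A x) m + ρ.act (oddPart n A x) m := by
  conv_lhs => rw [← evenPart_add_oddPart n A x]
  rw [map_add, LinearMap.add_apply]

/-- The common kernel of all elements of `𝔮(n) ⊗ I`. -/
def Nspace (ρ : QAct n A M') (I : Ideal A) : Submodule ℂ M' where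
  carrier := {m | ∀ x : ↥(qA n A), EntriesIn n A I ↑x → ρ.act x m = 0}
  add_mem' := by
    intro m m' hm hm' x hx
    rw [map_add, hm x hx, hm' x hx, add_zero]
  zero_mem' := fun x _ => map_zero _
  smul_mem' := by
    intro c m hm x hx
    rw [LinearMap.map_smul, hm x hx, smul_zero]

lemma mem_Nspace {ρ : QAct n A M'} {I : Ideal A} {m : M'} :
    m ∈ Nspace n A ρ I ↔ ∀ x : ↥(qA n A), EntriesIn n A I ↑x → ρ.act x m = 0 :=
  Iff.rfl

lemma Nspace_invt (ρ : QAct n A M') (hrep : QAct.IsRep n A ρ) (I : Ideal A) :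
    QAct.Invt n A ρ (Nspace n A ρ I) := by
  constructor
  · intro y m hm
    rw [mem_Nspace] at hm ⊢
    intro x hx
    have key : ∀ x' y' : ↥(qA n A), EntriesIn n A I ↑x' →
        ((IsEvenElt n A ↑x' ∨ IsEvenElt n A ↑y') ∨
          (IsOddElt n A ↑x' ∧ IsOddElt n A ↑y')) →
        ρ.act x' (ρ.act y' m) = 0 := by
      intro x' y' hx' hcase
      rcases hcase with hor | ⟨ho1, ho2⟩
      · rw [act_swap n A ρ hrep hor, hm x' hx', map_zero, zero_add,
          hm _ (entriesIn_qbr_left n A hx')]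
      · rw [act_swap_odd n A ρ hrep ho1 ho2, hm _ (entriesIn_qbr_left n A hx'),
          hm x' hx', map_zero, sub_zero]
    have e1 := key (evenPart n A x) (evenPart n A y) (entriesIn_evenPart n A hx)
      (Or.inl (Or.inl (evenPart_isEven n A x)))
    have e2 := key (evenPart n A x) (oddPart n A y) (entriesIn_evenPart n A hx)
      (Or.inl (Or.inl (evenPart_isEven n A x)))
    have e3 := key (oddPart n A x) (evenPart n A y) (entriesIn_oddPart n A hx)
      (Or.inl (Or.inr (evenPart_isEven n A y)))
    have e4 := key (oddPart n A x) (oddPart n A y) (entriesIn_oddPart n A hx)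
      (Or.inr ⟨oddPart_isOdd n A x, oddPart_isOdd n A y⟩)
    rw [act_split n A ρ x, act_split n A ρ y m, map_add, map_add, e1, e2, e3, e4]
    simp
  · intro m hm
    rw [mem_Nspace] at hm ⊢
    intro x hx
    rw [act_split n A ρ x]
    have he := LinearMap.ext_iff.mp (hrep.2.1 (evenPart n A x) (evenPart_isEven n A x)) m
    simp only [LinearMap.coe_comp, Function.comp_apply] at he
    have ho := LinearMap.ext_iff.mp (hrep.2.2.1 (oddPart n A x) (oddPart_isOdd n A x)) m
    simp only [LinearMap.coe_comp, Function.comp_apply, LinearMap.neg_apply] at ho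
    rw [← he, hm _ (entriesIn_evenPart n A hx), map_zero, zero_add]
    rw [hm _ (entriesIn_oddPart n A hx), map_zero] at ho
    exact neg_eq_zero.mp ho.symm

lemma semi_commute_pow {s t : Module.End ℂ M'} (h : s * t = t * s ∨ s * t = -(t * s))
    (k : ℕ) : s * t ^ k = t ^ k * s ∨ s * t ^ k = -(t ^ k * s) := by
  induction k with
  | zero => left; simp
  | succ k ih =>
    rw [pow_succ]
    rcases ih with ih | ih
    · rcases h with h | h
      · left; rw [← mul_assoc, ih, mul_assoc, h, ← mul_assoc]
      · right; rw [← mul_assoc, ih, mul_assoc, h, mul_neg, ← mul_assoc]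
    · rcases h with h | h
      · right; rw [← mul_assoc, ih, neg_mul, mul_assoc, h, ← mul_assoc]
      · left; rw [← mul_assoc, ih, neg_mul, mul_assoc, h, mul_neg, neg_neg, ← mul_assoc]

/-- A finite family of nilpotent endomorphisms which pairwise commute or
anticommute has a nonzero common kernel vector. -/
lemma exists_common_kernel [Nontrivial M'] (T : Finset (Module.End ℂ M'))
    (hnil : ∀ t ∈ T, IsNilpotent t)
    (hsc : ∀ s ∈ T, ∀ t ∈ T, s * t = t * s ∨ s * t = -(t * s)) :
    ∃ w : M', w ≠ 0 ∧ ∀ t ∈ T, t w = 0 := by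
  classical
  revert hnil hsc
  refine Finset.induction_on T ?_ ?_
  · intro _ _
    obtain ⟨w, hw⟩ := exists_ne (0 : M')
    exact ⟨w, hw, by simp⟩
  · intro a T' ha ih hnil hsc
    obtain ⟨w, hw0, hwk⟩ := ih (fun t ht => hnil t (Finset.mem_insert_of_mem ht))
      (fun s hs t ht => hsc s (Finset.mem_insert_of_mem hs) t (Finset.mem_insert_of_mem ht))
    obtain ⟨Na, hNa⟩ := hnil a (Finset.mem_insert_self a T')
    have hQ : ∃ j, (a ^ j) w = 0 := ⟨Na, by rw [hNa]; rfl⟩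
    have hj0 : (a ^ Nat.find hQ) w = 0 := Nat.find_spec hQ
    have hj0pos : Nat.find hQ ≠ 0 := by
      intro h
      apply hw0
      rw [h, pow_zero] at hj0
      simpa using hj0
    have hlt : Nat.find hQ - 1 < Nat.find hQ := by omega
    have hw'0 : (a ^ (Nat.find hQ - 1)) w ≠ 0 := Nat.find_min hQ hlt
    refine ⟨(a ^ (Nat.find hQ - 1)) w, hw'0, ?_⟩
    intro t ht
    rcases Finset.mem_insert.mp ht with rfl | ht'
    · have hpow : t * t ^ (Nat.find hQ - 1) = t ^ Nat.find hQ := by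
        rw [← pow_succ']
        congr 1
        omega
      rw [← Module.End.mul_apply, hpow, hj0]
    · have hsemi := semi_commute_pow
        (hsc t (Finset.mem_insert_of_mem ht') a (Finset.mem_insert_self a T'))
        (Nat.find hQ - 1)
      rcases hsemi with h | h
      · rw [← Module.End.mul_apply, h, Module.End.mul_apply, hwk t ht', map_zero]
      · rw [← Module.End.mul_apply, h, LinearMap.neg_apply, Module.End.mul_apply,
          hwk t ht', map_zero, neg_zero]

/-- Core nilpotency lemma: if `𝔮 ⊗ I₁²` acts by zero, then each even element of
`𝔮 ⊗ I₁` acts nilpotently on the irreducible module. -/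
lemma even_nilpotent (ρ : QAct n A M') (hn : 2 ≤ n) (hrep : QAct.IsRep n A ρ)
    (hirr : QAct.Irred n A ρ) [FiniteDimensional ℂ M'] (I1 : Ideal A)
    (hsq : ∀ x : ↥(qA n A), EntriesIn n A (I1 * I1) ↑x → ρ.act x = 0)
    (z : ↥(qA n A)) (hz0 : IsEvenElt n A ↑z) (hzI : EntriesIn n A I1 ↑z) :
    IsNilpotent (ρ.act z) := by
  haveI : Nontrivial M' := hirr.1
  obtain ⟨μ, hμ⟩ := Module.End.exists_eigenvalue (ρ.act z)
  set c : Module.End ℂ M' := ρ.act z with hc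
  set c' : Module.End ℂ M' := c - μ • 1 with hc'
  have hkey : ∀ y : ↥(qA n A), ∃ d : Module.End ℂ M',
      c' * ρ.act y - ρ.act y * c' = d ∧ c' * d = d * c' := by
    intro y
    refine ⟨ρ.act ⟨qbr n A ↑z ↑y, qbr_mem n A _ _⟩, ?_, ?_⟩
    · have h4 := act_qbr_of_even_left n A ρ hrep (x := z) (y := y) hz0
      have hmu : c' * ρ.act y - ρ.act y * c' = c * ρ.act y - ρ.act y * c := by
        rw [hc']
        simp only [sub_mul, mul_sub, smul_mul_assoc, mul_smul_comm, one_mul, mul_one]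
        abel
      rw [hmu, h4]
      simp [Module.End.mul_eq_comp, hc]
    · set w : ↥(qA n A) := ⟨qbr n A ↑z ↑y, qbr_mem n A _ _⟩ with hw
      have h4' := act_qbr_of_even_left n A ρ hrep (x := z) (y := w) hz0
      have hzero : ρ.act (⟨qbr n A ↑z ↑w, qbr_mem n A _ _⟩ : ↥(qA n A)) = 0 := by
        apply hsq
        exact entriesIn_qbr n A hzI (entriesIn_qbr_left n A hzI)
      rw [hzero] at h4'
      have hcd : c * ρ.act w = ρ.act w * c := by
        have h5 := sub_eq_zero.mp h4'.symm
        simpa [Module.End.mul_eq_comp] using h5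
      rw [hc']
      simp only [sub_mul, mul_sub, smul_mul_assoc, mul_smul_comm, one_mul, mul_one, hcd]
  have binom : ∀ (u d : Module.End ℂ M'), c' * u - u * c' = d → c' * d = d * c' →
      ∀ K : ℕ, ∃ e : Module.End ℂ M', c' * e = e * c' ∧
        c' ^ (K + 1) * u = u * c' ^ (K + 1) + e * c' ^ K := by
    intro u d hd hcd K
    have hcu : c' * u = u * c' + d := by rw [← hd]; abel
    induction K with
    | zero => exact ⟨d, hcd, by simpa using hcu⟩
    | succ K ih =>
      obtain ⟨e, hce, hK⟩ := ih
      refine ⟨d + e, by rw [mul_add, add_mul, hcd, hce], ?_⟩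
      calc c' ^ (K + 1 + 1) * u = c' * (c' ^ (K + 1) * u) := by
            rw [← mul_assoc, ← pow_succ']
        _ = c' * (u * c' ^ (K + 1)) + c' * (e * c' ^ K) := by rw [hK, mul_add]
        _ = (c' * u) * c' ^ (K + 1) + (c' * e) * c' ^ K := by rw [mul_assoc, mul_assoc]
        _ = (u * c' + d) * c' ^ (K + 1) + (e * c') * c' ^ K := by rw [hcu, hce]
        _ = u * c' ^ (K + 1 + 1) + (d + e) * c' ^ (K + 1) := by
            simp only [add_mul, mul_assoc, ← pow_succ', ← pow_succ]
            abel
  let G : Submodule ℂ M' :=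
    { carrier := {m | ∃ N, (c' ^ N) m = 0}
      add_mem' := by
        rintro m m' ⟨N, hN⟩ ⟨N', hN'⟩
        refine ⟨N + N', ?_⟩
        have e1 : (c' ^ (N + N')) m = 0 := by
          rw [add_comm, pow_add, Module.End.mul_apply, hN, map_zero]
        have e2 : (c' ^ (N + N')) m' = 0 := by
          rw [pow_add, Module.End.mul_apply, hN', map_zero]
        rw [map_add, e1, e2, add_zero]
      zero_mem' := ⟨0, map_zero _⟩
      smul_mem' := by
        rintro t m ⟨N, hN⟩
        exact ⟨N, by rw [LinearMap.map_smul, hN, smul_zero]⟩ }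
  have hGinvt : QAct.Invt n A ρ G := by
    constructor
    · intro y m hm
      obtain ⟨N, hN⟩ := hm
      obtain ⟨d, hd, hcd⟩ := hkey y
      obtain ⟨e, hce, hbin⟩ := binom (ρ.act y) d hd hcd N
      refine ⟨N + 1, ?_⟩
      have hN1 : (c' ^ (N + 1)) m = 0 := by
        rw [pow_succ', Module.End.mul_apply, hN, map_zero]
      calc (c' ^ (N + 1)) (ρ.act y m) = (c' ^ (N + 1) * ρ.act y) m := rfl
        _ = (ρ.act y * c' ^ (N + 1) + e * c' ^ N) m := by rw [hbin]
        _ = ρ.act y ((c' ^ (N + 1)) m) + e ((c' ^ N) m) := rfl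
        _ = 0 := by rw [hN1, hN, map_zero, map_zero, add_zero]
    · intro m hm
      obtain ⟨N, hN⟩ := hm
      have hPc : ρ.P ∘ₗ c = c ∘ₗ ρ.P := hrep.2.1 z hz0
      have hPc' : Commute (ρ.P) c' := by
        have h1 : ρ.P * c = c * ρ.P := by simpa [Module.End.mul_eq_comp] using hPc
        show ρ.P * c' = c' * ρ.P
        rw [hc']
        simp only [mul_sub, sub_mul, mul_smul_comm, smul_mul_assoc, mul_one, one_mul, h1]
      refine ⟨N, ?_⟩
      calc (c' ^ N) (ρ.P m) = (c' ^ N * ρ.P) m := rfl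
        _ = (ρ.P * c' ^ N) m := by rw [(hPc'.pow_right N).eq]
        _ = ρ.P ((c' ^ N) m) := rfl
        _ = 0 := by rw [hN, map_zero]
  obtain ⟨v, hv⟩ := hμ.exists_hasEigenvector
  have hvG : v ∈ G := ⟨1, by
    rw [pow_one, hc']
    simp [LinearMap.sub_apply, hv.apply_eq_smul]⟩
  have hGne : G ≠ ⊥ := by
    intro h
    rw [h] at hvG
    exact hv.2 ((Submodule.mem_bot ℂ).mp hvG)
  have hGtop : G = ⊤ := (hirr.2 G hGinvt).resolve_left hGne
  have hnil' : IsNilpotent c' := by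
    obtain ⟨S, hS⟩ := Module.finite_def.mp (inferInstance : Module.Finite ℂ M')
    have hmem : ∀ m : M', ∃ N, (c' ^ N) m = 0 := fun m =>
      show m ∈ G from hGtop ▸ Submodule.mem_top
    choose f hf using hmem
    refine ⟨S.sup f, ?_⟩
    have hker : Submodule.span ℂ (S : Set M') ≤ LinearMap.ker (c' ^ S.sup f) := by
      rw [Submodule.span_le]
      intro s hs
      rw [SetLike.mem_coe, LinearMap.mem_ker]
      have hle : f s ≤ S.sup f := Finset.le_sup hs
      have hsplit : c' ^ S.sup f = c' ^ (S.sup f - f s) * c' ^ f s := by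
        rw [← pow_add]
        congr 1
        omega
      rw [hsplit, Module.End.mul_apply, hf s, map_zero]
    rw [hS] at hker
    apply LinearMap.ext
    intro m
    simpa using LinearMap.mem_ker.mp (hker Submodule.mem_top)
  have htrc : LinearMap.trace ℂ M' c = 0 := trace_act_even n A ρ hn hrep z hz0
  have htrc' : LinearMap.trace ℂ M' c' = 0 :=
    (LinearMap.isNilpotent_trace_of_isNilpotent hnil').eq_zero
  have hμ0 : μ = 0 := by
    have hdecomp : c = c' + μ • 1 := by rw [hc']; abel
    have htr2 : LinearMap.trace ℂ M' c = μ * (Module.finrank ℂ M' : ℂ) := by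
      rw [hdecomp, map_add, htrc', zero_add, LinearMap.map_smul, LinearMap.trace_one,
        smul_eq_mul]
    have hfr : (Module.finrank ℂ M' : ℂ) ≠ 0 := by
      have := Module.finrank_pos (R := ℂ) (M := M')
      exact Nat.cast_ne_zero.mpr (by omega)
    rw [htrc] at htr2
    exact (mul_eq_zero.mp htr2.symm).resolve_right hfr
  have hcc : c = c' := by rw [hc', hμ0]; simp
  show IsNilpotent c
  rw [hcc]
  exact hnil'

lemma odd_sq_zero (ρ : QAct n A M') (hrep : QAct.IsRep n A ρ) (I1 : Ideal A)
    (hsq : ∀ x : ↥(qA n A), EntriesIn n A (I1 * I1) ↑x → ρ.act x = 0)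
    (x : ↥(qA n A)) (hx0 : IsOddElt n A ↑x) (hxI : EntriesIn n A I1 ↑x) :
    ρ.act x * ρ.act x = 0 := by
  have h5 := act_qbr_of_odd n A ρ hrep hx0 hx0
  rw [hsq _ (entriesIn_qbr n A hxI hxI)] at h5
  have h2 : (2 : ℂ) • (ρ.act x ∘ₗ ρ.act x) = 0 := by
    rw [two_smul]
    exact h5.symm ▸ (by rw [← h5])
  have h3 := (smul_eq_zero.mp h2).resolve_left (by norm_num)
  simpa [Module.End.mul_eq_comp] using h3

lemma acts_commute (ρ : QAct n A M') (hrep : QAct.IsRep n A ρ) (I1 : Ideal A)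
    (hsq : ∀ x : ↥(qA n A), EntriesIn n A (I1 * I1) ↑x → ρ.act x = 0)
    {z y : ↥(qA n A)} (hz0 : IsEvenElt n A ↑z) (hzI : EntriesIn n A I1 ↑z)
    (hyI : EntriesIn n A I1 ↑y) :
    ρ.act z * ρ.act y = ρ.act y * ρ.act z := by
  have h4 := act_qbr_of_even_left n A ρ hrep (x := z) (y := y) hz0
  rw [hsq _ (entriesIn_qbr n A hzI hyI)] at h4
  have h5 := sub_eq_zero.mp h4.symm
  simpa [Module.End.mul_eq_comp] using h5

lemma acts_anticommute (ρ : QAct n A M') (hrep : QAct.IsRep n A ρ) (I1 : Ideal A)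
    (hsq : ∀ x : ↥(qA n A), EntriesIn n A (I1 * I1) ↑x → ρ.act x = 0)
    {x y : ↥(qA n A)} (hx0 : IsOddElt n A ↑x) (hy0 : IsOddElt n A ↑y)
    (hxI : EntriesIn n A I1 ↑x) (hyI : EntriesIn n A I1 ↑y) :
    ρ.act x * ρ.act y = -(ρ.act y * ρ.act x) := by
  have h5 := act_qbr_of_odd n A ρ hrep hx0 hy0
  rw [hsq _ (entriesIn_qbr n A hxI hyI)] at h5
  have h6 := eq_neg_of_add_eq_zero_left h5.symm
  simpa [Module.End.mul_eq_comp] using h6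

/-- The core lemma: if `𝔮 ⊗ I₁²` acts by zero, there is a nonzero vector
annihilated by all of `𝔮 ⊗ I₁`. -/
lemma core_exists (ρ : QAct n A M') (hn : 2 ≤ n) (hrep : QAct.IsRep n A ρ)
    (hirr : QAct.Irred n A ρ) [FiniteDimensional ℂ M'] (I1 : Ideal A)
    (hsq : ∀ x : ↥(qA n A), EntriesIn n A (I1 * I1) ↑x → ρ.act x = 0) :
    ∃ w : M', w ≠ 0 ∧ ∀ x : ↥(qA n A), EntriesIn n A I1 ↑x → ρ.act x w = 0 := by
  classical
  haveI : Nontrivial M' := hirr.1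
  let eSrc : Submodule ℂ ↥(qA n A) :=
    { carrier := {x | IsEvenElt n A ↑x ∧ EntriesIn n A I1 ↑x}
      add_mem' := by
        rintro x y ⟨hx0, hxI⟩ ⟨hy0, hyI⟩
        constructor
        · show ((x : QPair n A) + (y : QPair n A)).2 = 0
          rw [Prod.snd_add, hx0, hy0, add_zero]
        · intro i j
          constructor
          · show ((x : QPair n A) + (y : QPair n A)).1 i j ∈ I1
            rw [Prod.fst_add, Matrix.add_apply]
            exact add_mem (hxI i j).1 (hyI i j).1
          · show ((x : QPair n A) + (y : QPair n A)).2 i j ∈ I1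
            rw [Prod.snd_add, Matrix.add_apply]
            exact add_mem (hxI i j).2 (hyI i j).2
      zero_mem' := by
        constructor
        · show ((0 : QPair n A)).2 = 0
          rfl
        · intro i j
          exact ⟨I1.zero_mem, I1.zero_mem⟩
      smul_mem' := by
        rintro t x ⟨hx0, hxI⟩
        constructor
        · show (t • (x : QPair n A)).2 = 0
          rw [Prod.smul_snd, hx0, smul_zero]
        · intro i j
          constructor
          · show (t • (x : QPair n A)).1 i j ∈ I1
            rw [Prod.smul_fst, Matrix.smul_apply]
            exact smulC_mem _ _ _ (hxI i j).1
          · show (t • (x : QPair n A)).2 i j ∈ I1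
            rw [Prod.smul_snd, Matrix.smul_apply]
            exact smulC_mem _ _ _ (hxI i j).2 }
  let oSrc : Submodule ℂ ↥(qA n A) :=
    { carrier := {x | IsOddElt n A ↑x ∧ EntriesIn n A I1 ↑x}
      add_mem' := by
        rintro x y ⟨hx0, hxI⟩ ⟨hy0, hyI⟩
        constructor
        · show ((x : QPair n A) + (y : QPair n A)).1 = 0
          rw [Prod.fst_add, hx0, hy0, add_zero]
        · intro i j
          constructor
          · show ((x : QPair n A) + (y : QPair n A)).1 i j ∈ I1
            rw [Prod.fst_add, Matrix.add_apply]
            exact add_mem (hxI i j).1 (hyI i j).1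
          · show ((x : QPair n A) + (y : QPair n A)).2 i j ∈ I1
            rw [Prod.snd_add, Matrix.add_apply]
            exact add_mem (hxI i j).2 (hyI i j).2
      zero_mem' := by
        constructor
        · show ((0 : QPair n A)).1 = 0
          rfl
        · intro i j
          exact ⟨I1.zero_mem, I1.zero_mem⟩
      smul_mem' := by
        rintro t x ⟨hx0, hxI⟩
        constructor
        · show (t • (x : QPair n A)).1 = 0
          rw [Prod.smul_fst, hx0, smul_zero]
        · intro i j
          constructor
          · show (t • (x : QPair n A)).1 i j ∈ I1
            rw [Prod.smul_fst, Matrix.smul_apply]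
            exact smulC_mem _ _ _ (hxI i j).1
          · show (t • (x : QPair n A)).2 i j ∈ I1
            rw [Prod.smul_snd, Matrix.smul_apply]
            exact smulC_mem _ _ _ (hxI i j).2 }
  let Ci := eSrc.map ρ.act
  let Oi := oSrc.map ρ.act
  obtain ⟨TC, hTC⟩ := IsNoetherian.noetherian Ci
  obtain ⟨TO, hTO⟩ := IsNoetherian.noetherian Oi
  have hTCsub : ∀ t ∈ TC, ∃ x : ↥(qA n A),
      (IsEvenElt n A ↑x ∧ EntriesIn n A I1 ↑x) ∧ ρ.act x = t := by
    intro t ht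
    have htm : t ∈ Ci := hTC ▸ Submodule.subset_span ht
    obtain ⟨x, hx, hxt⟩ := Submodule.mem_map.mp htm
    exact ⟨x, hx, hxt⟩
  have hTOsub : ∀ t ∈ TO, ∃ x : ↥(qA n A),
      (IsOddElt n A ↑x ∧ EntriesIn n A I1 ↑x) ∧ ρ.act x = t := by
    intro t ht
    have htm : t ∈ Oi := hTO ▸ Submodule.subset_span ht
    obtain ⟨x, hx, hxt⟩ := Submodule.mem_map.mp htm
    exact ⟨x, hx, hxt⟩
  have hnil : ∀ t ∈ TC ∪ TO, IsNilpotent t := by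
    intro t ht
    rcases Finset.mem_union.mp ht with ht | ht
    · obtain ⟨x, ⟨hx0, hxI⟩, rfl⟩ := hTCsub t ht
      exact even_nilpotent n A ρ hn hrep hirr I1 hsq x hx0 hxI
    · obtain ⟨x, ⟨hx0, hxI⟩, rfl⟩ := hTOsub t ht
      exact ⟨2, by rw [pow_two]; exact odd_sq_zero n A ρ hrep I1 hsq x hx0 hxI⟩
  have hsc : ∀ s ∈ TC ∪ TO, ∀ t ∈ TC ∪ TO, s * t = t * s ∨ s * t = -(t * s) := by
    intro s hs t ht
    rcases Finset.mem_union.mp hs with hs | hs <;> rcases Finset.mem_union.mp ht with ht | ht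
    · obtain ⟨x, ⟨hx0, hxI⟩, rfl⟩ := hTCsub s hs
      obtain ⟨y, ⟨hy0, hyI⟩, rfl⟩ := hTCsub t ht
      exact Or.inl (acts_commute n A ρ hrep I1 hsq hx0 hxI hyI)
    · obtain ⟨x, ⟨hx0, hxI⟩, rfl⟩ := hTCsub s hs
      obtain ⟨y, ⟨hy0, hyI⟩, rfl⟩ := hTOsub t ht
      exact Or.inl (acts_commute n A ρ hrep I1 hsq hx0 hxI hyI)
    · obtain ⟨x, ⟨hx0, hxI⟩, rfl⟩ := hTOsub s hs
      obtain ⟨y, ⟨hy0, hyI⟩, rfl⟩ := hTCsub t ht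
      exact Or.inl (acts_commute n A ρ hrep I1 hsq hy0 hyI hxI).symm
    · obtain ⟨x, ⟨hx0, hxI⟩, rfl⟩ := hTOsub s hs
      obtain ⟨y, ⟨hy0, hyI⟩, rfl⟩ := hTOsub t ht
      exact Or.inr (acts_anticommute n A ρ hrep I1 hsq hx0 hy0 hxI hyI)
  obtain ⟨w, hw0, hwk⟩ := exists_common_kernel (TC ∪ TO) hnil hsc
  refine ⟨w, hw0, ?_⟩
  let ev : Module.End ℂ M' →ₗ[ℂ] M' :=
    { toFun := fun f => f w
      map_add' := fun f g => rfl
      map_smul' := fun c f => rfl }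
  have hkerC : Ci ≤ LinearMap.ker ev := by
    rw [← hTC, Submodule.span_le]
    intro t ht
    rw [SetLike.mem_coe, LinearMap.mem_ker]
    exact hwk t (Finset.mem_union_left _ ht)
  have hkerO : Oi ≤ LinearMap.ker ev := by
    rw [← hTO, Submodule.span_le]
    intro t ht
    rw [SetLike.mem_coe, LinearMap.mem_ker]
    exact hwk t (Finset.mem_union_right _ ht)
  intro x hx
  rw [act_split n A ρ x w]
  have h1 : ρ.act (evenPart n A x) ∈ Ci :=
    Submodule.mem_map_of_mem ⟨evenPart_isEven n A x, entriesIn_evenPart n A hx⟩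
  have h2 : ρ.act (oddPart n A x) ∈ Oi :=
    Submodule.mem_map_of_mem ⟨oddPart_isOdd n A x, entriesIn_oddPart n A hx⟩
  have e1 : ρ.act (evenPart n A x) w = 0 := LinearMap.mem_ker.mp (hkerC h1)
  have e2 : ρ.act (oddPart n A x) w = 0 := LinearMap.mem_ker.mp (hkerO h2)
  rw [e1, e2, add_zero]

/-- Any ideal containing the annihilator ideal has finite codimension in `A`. -/
lemma findim_quotient (ρ : QAct n A M') (hn : 2 ≤ n) (hrep : QAct.IsRep n A ρ)
    [FiniteDimensional ℂ M'] {J : Ideal A} (hKJ : Kann n A ρ hn hrep ≤ J) :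
    FiniteDimensional ℂ (A ⧸ J) := by
  classical
  let Φ : A →ₗ[ℂ] ((Fin (n + 1) × Fin (n + 1) × Bool) ⊕ (Fin (n + 1) × Bool)
      → Module.End ℂ M') :=
    { toFun := fun a => Sum.elim
        (fun p => if p.2.2 then ρ.act (E0 n A p.1 p.2.1 a) else ρ.act (E1 n A p.1 p.2.1 a))
        (fun p => if p.2 then ρ.act (H0 n A p.1 a) else ρ.act (H1 n A p.1 a))
      map_add' := by
        intro a b
        funext t
        rcases t with ⟨i, j, bb⟩ | ⟨i, bb⟩ <;> cases bb <;>
          simp [E0_add, E1_add, H0_add, H1_add]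
      map_smul' := by
        intro cc a
        funext t
        rcases t with ⟨i, j, bb⟩ | ⟨i, bb⟩ <;> cases bb <;>
          simp [E0_smul, E1_smul, H0_smul, H1_smul] }
  have hker : LinearMap.ker Φ ≤ LinearMap.ker ((Ideal.Quotient.mkₐ ℂ J).toLinearMap) := by
    intro a ha
    rw [LinearMap.mem_ker] at ha ⊢
    have hmem : a ∈ Kann n A ρ hn hrep := by
      refine ⟨fun i j => ?_, fun i j => ?_, fun i => ?_, fun i => ?_⟩
      · have := congrFun ha (Sum.inl (i, j, true)); simpa [Φ] using this
      · have := congrFun ha (Sum.inl (i, j, false)); simpa [Φ] using this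
      · have := congrFun ha (Sum.inr (i, true)); simpa [Φ] using this
      · have := congrFun ha (Sum.inr (i, false)); simpa [Φ] using this
    have haJ : a ∈ J := hKJ hmem
    simpa [Ideal.Quotient.mkₐ_eq_mk] using (Ideal.Quotient.eq_zero_iff_mem).mpr haJ
  haveI : FiniteDimensional ℂ (A ⧸ LinearMap.ker Φ) :=
    LinearEquiv.finiteDimensional (LinearMap.quotKerEquivRange Φ).symm
  have hFsurj : Function.Surjective (Submodule.liftQ (LinearMap.ker Φ)
      (Ideal.Quotient.mkₐ ℂ J).toLinearMap hker) := by
    intro y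
    obtain ⟨a, rfl⟩ := Ideal.Quotient.mk_surjective (I := J) y
    exact ⟨Submodule.Quotient.mk a, by simp [Submodule.liftQ_apply, Ideal.Quotient.mkₐ_eq_mk]⟩
  exact Module.Finite.of_surjective _ hFsurj

end Aux

/-- Every irreducible finite-dimensional `𝔮(n) ⊗ A`-module (`A` finitely generated) is
annihilated by `𝔮 ⊗ J` for some radical ideal `J ⊆ A` of finite codimension; that is,
it has finite reduced support. -/
theorem irred_fd_has_finite_reduced_support (hn : 2 ≤ n)
    [Algebra.FiniteType ℂ A] [FiniteDimensional ℂ M]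
    (ρ : QAct n A M) (hrep : QAct.IsRep n A ρ) (hirr : QAct.Irred n A ρ) :
    ∃ J : Ideal A, J.IsRadical ∧ FiniteDimensional ℂ (A ⧸ J) ∧
      ∀ x : ↥(qA n A), EntriesIn n A J ↑x → ρ.act x = 0 := by
  classical
  haveI : Nontrivial M := hirr.1
  haveI : IsNoetherianRing A := Algebra.FiniteType.isNoetherianRing ℂ A
  set K := Kann n A ρ hn hrep with hK
  set J := K.radical with hJ
  refine ⟨J, Ideal.radical_isRadical K, findim_quotient n A ρ hn hrep K.le_radical, ?_⟩
  obtain ⟨m0, hm0⟩ := Ideal.exists_radical_pow_le_of_fg K (IsNoetherian.noetherian _)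
  have hdich : ∀ k : ℕ, Nspace n A ρ (J ^ k) = ⊥ ∨ Nspace n A ρ (J ^ k) = ⊤ :=
    fun k => hirr.2 _ (Nspace_invt n A ρ hrep _)
  have htop : Nspace n A ρ (J ^ max m0 1) = ⊤ := by
    rw [eq_top_iff]
    intro m _
    intro x hx
    have hle : J ^ max m0 1 ≤ K :=
      le_trans (Ideal.pow_le_pow_right (le_max_left m0 1)) hm0
    rw [act_eq_zero_of_entriesIn n A ρ hn hrep hle x hx, LinearMap.zero_apply]
  suffices hN1 : Nspace n A ρ (J ^ 1) = ⊤ by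
    intro x hx
    apply LinearMap.ext
    intro m
    have hm : m ∈ Nspace n A ρ (J ^ 1) := hN1 ▸ Submodule.mem_top
    rw [LinearMap.zero_apply]
    exact hm x (by rwa [pow_one])
  have hex : ∃ k, Nspace n A ρ (J ^ k) = ⊤ := ⟨max m0 1, htop⟩
  by_cases h1 : Nspace n A ρ (J ^ 1) = ⊤
  · exact h1
  exfalso
  have hkk := Nat.find_spec hex
  have hkk0 : Nat.find hex ≠ 0 := by
    intro h0
    apply h1
    rw [h0] at hkk
    rw [eq_top_iff]
    intro m _
    intro x hx
    have hm0' : m ∈ Nspace n A ρ (J ^ 0) := hkk ▸ Submodule.mem_top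
    exact hm0' x (entriesIn_mono n A (by rw [pow_zero, Ideal.one_eq_top]; exact le_top) hx)
  have hkk1 : Nat.find hex ≠ 1 := fun h => h1 (h ▸ hkk)
  have hk'lt : Nat.find hex - 1 < Nat.find hex := by omega
  have hbot : Nspace n A ρ (J ^ (Nat.find hex - 1)) = ⊥ :=
    (hdich (Nat.find hex - 1)).resolve_right (Nat.find_min hex hk'lt)
  have htop' : Nspace n A ρ (J ^ (Nat.find hex - 1 + 1)) = ⊤ := by
    rw [show Nat.find hex - 1 + 1 = Nat.find hex by omega]
    exact hkk
  have hsq : ∀ x : ↥(qA n A),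
      EntriesIn n A ((J ^ (Nat.find hex - 1)) * (J ^ (Nat.find hex - 1))) ↑x →
        ρ.act x = 0 := by
    intro x hx
    apply LinearMap.ext
    intro m
    have hm : m ∈ Nspace n A ρ (J ^ (Nat.find hex - 1 + 1)) := by rw [htop']; trivial
    rw [LinearMap.zero_apply]
    refine hm x (entriesIn_mono n A ?_ hx)
    rw [← pow_add]
    exact Ideal.pow_le_pow_right (by omega)
  obtain ⟨w, hw0, hwk⟩ := core_exists n A ρ hn hrep hirr _ hsq
  have hwmem : w ∈ Nspace n A ρ (J ^ (Nat.find hex - 1)) := fun x hx => hwk x hx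
  rw [hbot] at hwmem
  exact hw0 ((Submodule.mem_bot ℂ).mp hwmem)
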